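/- A subset S of the vertices of the Petersen graph is a mutual-visibility set if and only if the induced subgraph on S has maximum degree at most 1. -/

import Mathlib

open scoped Classical

def SimpleGraph.MutualVisibilitySet {V : Type*} (G : SimpleGraph V) (S : Set V) : Prop :=
  ∀ u ∈ S, ∀ v ∈ S, ∃ p : G.Walk u v, p.length = G.dist u v ∧
    ∀ w ∈ p.support, w ∈ S → w = u ∨ w = v

abbrev PV := {s : Finset (Fin 5) // s.card = 2}

def Petersen : SimpleGraph PV where
  Adj a b := Disjoint a.1 b.1
  symm := ⟨fun a b h => h.symm⟩
  loopless := by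
    constructor
    intro a h
    have h0 : a.1 = ⊥ := disjoint_self.mp h
    have h2 := a.2
    rw [h0] at h2
    simp at h2

instance PetersenAdjDec : DecidableRel Petersen.Adj := fun a b =>
  decidable_of_iff (Disjoint a.1 b.1) Iff.rfl

lemma tri_free : ∀ a b c : PV, Petersen.Adj a b → Petersen.Adj a c → Petersen.Adj b c → False := by
  decide

lemma common_card : ∀ u v : PV, u ≠ v → ¬ Petersen.Adj u v →
    (Finset.univ.filter (fun x => decide (Petersen.Adj u x) && decide (Petersen.Adj x v))).card
      = 1 := by
  decide

lemma common_unique (u v : PV) (h : u ≠ v) (hna : ¬ Petersen.Adj u v) :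
    ∃! x : PV, Petersen.Adj u x ∧ Petersen.Adj x v := by
  obtain ⟨a, ha⟩ := Finset.card_eq_one.mp (common_card u v h hna)
  have haa : Petersen.Adj u a ∧ Petersen.Adj a v := by
    have : a ∈ Finset.univ.filter
        (fun x => decide (Petersen.Adj u x) && decide (Petersen.Adj x v)) := by
      rw [ha]; simp
    simpa using this
  refine ⟨a, haa, fun y hy => ?_⟩
  have : y ∈ Finset.univ.filter
      (fun x => decide (Petersen.Adj u x) && decide (Petersen.Adj x v)) := by
    simp [hy.1, hy.2]
  rw [ha] at this; simpa using this

lemma dist_two {u v : PV} (h : u ≠ v) (hna : ¬ Petersen.Adj u v)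
    {x : PV} (h1 : Petersen.Adj u x) (h2 : Petersen.Adj x v) :
    Petersen.dist u v = 2 := by
  have hle := SimpleGraph.dist_le
    (SimpleGraph.Walk.cons h1 (SimpleGraph.Walk.cons h2 SimpleGraph.Walk.nil))
  simp only [SimpleGraph.Walk.length_cons, SimpleGraph.Walk.length_nil] at hle
  have hr : Petersen.Reachable u v := ⟨SimpleGraph.Walk.cons h1
    (SimpleGraph.Walk.cons h2 SimpleGraph.Walk.nil)⟩
  have h0 : 0 < Petersen.dist u v := hr.pos_dist_of_ne h
  have h1' : Petersen.dist u v ≠ 1 := fun hd => hna (SimpleGraph.dist_eq_one_iff_adj.mp hd)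
  omega

lemma walk_len2 {V : Type*} {G : SimpleGraph V} {u v : V} (p : G.Walk u v)
    (h : p.length = 2) : ∃ x, G.Adj u x ∧ G.Adj x v ∧ p.support = [u, x, v] := by
  cases p with
  | nil => simp at h
  | cons h1 q =>
    cases q with
    | nil => simp at h
    | cons h2 r =>
      cases r with
      | nil => exact ⟨_, h1, h2, by simp⟩
      | cons h3 s => simp [SimpleGraph.Walk.length_cons] at h

theorem stmt11 (S : Set PV) :
    Petersen.MutualVisibilitySet S ↔ ∀ v ∈ S, {u ∈ S | Petersen.Adj v u}.ncard ≤ 1 := by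
  constructor
  · intro hmv v hv
    rw [Set.ncard_le_one (Set.toFinite _)]
    rintro a ⟨ha, hva⟩ b ⟨hb, hvb⟩
    by_contra hab
    have hnab : ¬ Petersen.Adj a b := fun h => tri_free v a b hva hvb h
    obtain ⟨p, hlen, hsup⟩ := hmv a ha b hb
    rw [dist_two hab hnab (Petersen.adj_symm hva) hvb] at hlen
    obtain ⟨x, h1, h2, hs⟩ := walk_len2 p hlen
    obtain ⟨c, -, huniq⟩ := common_unique a b hab hnab
    have hvx : v = x := (huniq v ⟨Petersen.adj_symm hva, hvb⟩).trans (huniq x ⟨h1, h2⟩).symm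
    have := hsup v (by rw [hs, hvx]; simp) hv
    rcases this with h | h
    · exact Petersen.loopless.irrefl a (h ▸ hva)
    · exact Petersen.loopless.irrefl b (h ▸ hvb)
  · intro hdeg u hu v hv
    by_cases heq : u = v
    · subst heq
      exact ⟨SimpleGraph.Walk.nil, by simp [SimpleGraph.dist_self], by simp⟩
    by_cases hadj : Petersen.Adj u v
    · refine ⟨SimpleGraph.Walk.cons hadj SimpleGraph.Walk.nil, ?_, ?_⟩
      · simp [SimpleGraph.dist_eq_one_iff_adj.mpr hadj]
      · intro w hw _; simpa using hw
    · obtain ⟨x, ⟨h1, h2⟩, -⟩ := common_unique u v heq hadj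
      have hxS : x ∉ S := by
        intro hxS
        have hle := hdeg x hxS
        have h2' : ({u, v} : Set PV) ⊆ {a ∈ S | Petersen.Adj x a} := by
          rintro a (rfl | rfl)
          · exact ⟨hu, Petersen.adj_symm h1⟩
          · exact ⟨hv, h2⟩
        have := Set.ncard_le_ncard h2' (Set.toFinite _)
        rw [Set.ncard_pair heq] at this
        omega
      refine ⟨SimpleGraph.Walk.cons h1 (SimpleGraph.Walk.cons h2 SimpleGraph.Walk.nil),
        by simp [dist_two heq hadj h1 h2], ?_⟩
      intro w hw hwS
      simp only [SimpleGraph.Walk.support_cons, SimpleGraph.Walk.support_nil,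
        List.mem_cons, List.mem_singleton] at hw
      rcases hw with rfl | rfl | rfl | h
      · exact Or.inl rfl
      · exact absurd hwS hxS
      · exact Or.inr rfl
      · simp at h
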